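/- Let α ≥ 0 with α ≠ 1 and let a₁, ..., a_K be real numbers. If α ∈ [0,1), then the function Z ↦ Σ_{i=1}^K exp_α( max{ −a_i − Z, −1/(1−α) } ) is continuous and strictly decreasing where positive, tends to 0 as Z → ∞ and to ∞ as Z → −∞, and there exists a unique Z ∈ ℝ at which it equals 1. If α > 1, then the function Z ↦ Σ_{i=1}^K exp_α( −a_i − Z ), defined for Z > 1/(1−α) − min_i a_i, is continuous and decreasing, tends to 0 as Z → ∞ and to ∞ as Z → (1/(1−α) − min_i a_i)⁺, and there exists a unique such Z at which it equals 1. -/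

import Mathlib

open Filter Topology
open scoped BigOperators

noncomputable section

/-- The `α`-exponential `exp_α(s) = ((1−α)s + 1)^{1/(1−α)}`. -/
def expAlpha (α s : ℝ) : ℝ := ((1 - α) * s + 1) ^ (1 / (1 - α))

set_option maxHeartbeats 1000000 in
/-- Remark 1.12: properties of the normalization map `Z` for the
`α`-logarithmic loss, in both regimes `α ∈ [0,1)` and `α > 1`. -/
theorem statement15 (α : ℝ) (hα0 : 0 ≤ α) (hα1 : α ≠ 1)
    {K : ℕ} (hK : 1 ≤ K) (a : Fin K → ℝ) :
    (α < 1 →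
      (Continuous (fun Z : ℝ =>
          ∑ i, expAlpha α (max (-(a i) - Z) (-(1 / (1 - α))))) ∧
       StrictAntiOn (fun Z : ℝ =>
          ∑ i, expAlpha α (max (-(a i) - Z) (-(1 / (1 - α)))))
          {Z : ℝ | 0 < ∑ i, expAlpha α (max (-(a i) - Z) (-(1 / (1 - α))))} ∧
       Tendsto (fun Z : ℝ =>
          ∑ i, expAlpha α (max (-(a i) - Z) (-(1 / (1 - α))))) atTop (𝓝 0) ∧
       Tendsto (fun Z : ℝ =>
          ∑ i, expAlpha α (max (-(a i) - Z) (-(1 / (1 - α))))) atBot atTop ∧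
       (∃! Z : ℝ, ∑ i, expAlpha α (max (-(a i) - Z) (-(1 / (1 - α)))) = 1))) ∧
    (1 < α →
      (ContinuousOn (fun Z : ℝ => ∑ i, expAlpha α (-(a i) - Z))
          (Set.Ioi (1 / (1 - α) - ⨅ i, a i)) ∧
       AntitoneOn (fun Z : ℝ => ∑ i, expAlpha α (-(a i) - Z))
          (Set.Ioi (1 / (1 - α) - ⨅ i, a i)) ∧
       Tendsto (fun Z : ℝ => ∑ i, expAlpha α (-(a i) - Z)) atTop (𝓝 0) ∧
       Tendsto (fun Z : ℝ => ∑ i, expAlpha α (-(a i) - Z))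
          (𝓝[>] (1 / (1 - α) - ⨅ i, a i)) atTop ∧
       (∃! Z : ℝ, Z ∈ Set.Ioi (1 / (1 - α) - ⨅ i, a i) ∧
          ∑ i, expAlpha α (-(a i) - Z) = 1))) := by
  constructor
  · -- Case α < 1
    intro hlt
    have hβ : (0:ℝ) < 1 - α := by linarith
    have hβne : (1:ℝ) - α ≠ 0 := ne_of_gt hβ
    have hp : (0:ℝ) < 1 / (1 - α) := by positivity
    set F : ℝ → ℝ := fun Z => ∑ i, expAlpha α (max (-(a i) - Z) (-(1 / (1 - α)))) with hFdef
    have hterm : ∀ (i : Fin K) (Z : ℝ),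
        expAlpha α (max (-(a i) - Z) (-(1 / (1 - α)))) =
        (max ((1 - α) * (-(a i) - Z) + 1) 0) ^ (1 / (1 - α)) := by
      intro i Z
      unfold expAlpha
      congr 1
      rw [mul_max_of_nonneg _ _ hβ.le, ← max_add_add_right]
      congr 1
      field_simp
      norm_num
    have hFeq : ∀ Z, F Z = ∑ i, (max ((1 - α) * (-(a i) - Z) + 1) 0) ^ (1 / (1 - α)) :=
      fun Z => Finset.sum_congr rfl fun i _ => hterm i Z
    have hnn : ∀ (i : Fin K) (Z : ℝ),
        (0:ℝ) ≤ (max ((1 - α) * (-(a i) - Z) + 1) 0) ^ (1 / (1 - α)) :=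
      fun i Z => Real.rpow_nonneg (le_max_right _ _) _
    have hmono : ∀ (i : Fin K) {Z₁ Z₂ : ℝ}, Z₁ ≤ Z₂ →
        (max ((1 - α) * (-(a i) - Z₂) + 1) 0) ^ (1 / (1 - α)) ≤
        (max ((1 - α) * (-(a i) - Z₁) + 1) 0) ^ (1 / (1 - α)) := by
      intro i Z₁ Z₂ h
      apply Real.rpow_le_rpow (le_max_right _ _) _ hp.le
      exact max_le_max (by nlinarith) le_rfl
    have hcont : Continuous F := by
      rw [show F = fun Z => ∑ i, (max ((1 - α) * (-(a i) - Z) + 1) 0) ^ (1 / (1 - α))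
        from funext hFeq]
      apply continuous_finset_sum
      intro i _
      apply Continuous.rpow_const
      · exact ((continuous_const.mul (continuous_const.sub continuous_id)).add
          continuous_const).max continuous_const
      · intro x; right; exact hp.le
    have hSA : StrictAntiOn F {Z : ℝ | 0 < F Z} := by
      intro Z₁ h₁ Z₂ h₂ h12
      have h₂' : 0 < ∑ i, (max ((1 - α) * (-(a i) - Z₂) + 1) 0) ^ (1 / (1 - α)) := by
        rw [← hFeq]; exact h₂
      obtain ⟨i, -, hi⟩ : ∃ i ∈ Finset.univ,
          (0:ℝ) < (max ((1 - α) * (-(a i) - Z₂) + 1) 0) ^ (1 / (1 - α)) := by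
        apply Finset.exists_lt_of_sum_lt (f := fun _ => (0:ℝ))
        simpa using h₂'
      have hb2 : 0 < (1 - α) * (-(a i) - Z₂) + 1 := by
        by_contra h
        push_neg at h
        rw [max_eq_right h, Real.zero_rpow (ne_of_gt hp)] at hi
        exact lt_irrefl 0 hi
      have hb1 : (1 - α) * (-(a i) - Z₂) + 1 < (1 - α) * (-(a i) - Z₁) + 1 := by nlinarith
      rw [hFeq Z₁, hFeq Z₂]
      apply Finset.sum_lt_sum
      · intro j _; exact hmono j h12.le
      · refine ⟨i, Finset.mem_univ i, ?_⟩
        rw [max_eq_left hb2.le, max_eq_left (by linarith)]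
        exact Real.rpow_lt_rpow hb2.le hb1 hp
    have h3 : Tendsto F atTop (𝓝 0) := by
      have hev : ∀ᶠ Z in atTop, F Z = 0 := by
        have hall : ∀ i : Fin K, ∀ᶠ Z in (atTop : Filter ℝ),
            (1 - α) * (-(a i) - Z) + 1 ≤ 0 := by
          intro i
          filter_upwards [eventually_ge_atTop (1 / (1 - α) - a i)] with Z hZ
          have h1 : (1 - α) * (1 / (1 - α)) = 1 := by field_simp
          nlinarith [mul_le_mul_of_nonneg_left hZ hβ.le]
        filter_upwards [eventually_all.2 hall] with Z hZ
        rw [hFeq]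
        apply Finset.sum_eq_zero
        intro i _
        rw [max_eq_right (hZ i), Real.zero_rpow (ne_of_gt hp)]
      exact Tendsto.congr' (hev.mono fun Z h => h.symm) tendsto_const_nhds
    have i0 : Fin K := ⟨0, hK⟩
    have h4 : Tendsto F atBot atTop := by
      have hb : Tendsto (fun Z : ℝ => (1 - α) * (-(a i0) - Z) + 1) atBot atTop := by
        rw [tendsto_atTop]
        intro b
        filter_upwards [eventually_le_atBot ((1 - b) / (1 - α) - a i0)] with Z hZ
        have h1 : (1 - α) * ((1 - b) / (1 - α)) = 1 - b := by field_simp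
        nlinarith [mul_le_mul_of_nonneg_left hZ hβ.le]
      have hmax : Tendsto (fun Z : ℝ => max ((1 - α) * (-(a i0) - Z) + 1) 0) atBot atTop :=
        tendsto_atTop_mono (fun Z => le_max_left _ _) hb
      have hterm0 : Tendsto
          (fun Z : ℝ => (max ((1 - α) * (-(a i0) - Z) + 1) 0) ^ (1 / (1 - α)))
          atBot atTop := (tendsto_rpow_atTop hp).comp hmax
      apply tendsto_atTop_mono _ hterm0
      intro Z
      rw [hFeq]
      exact Finset.single_le_sum (fun j _ => hnn j Z) (Finset.mem_univ i0)
    refine ⟨hcont, hSA, h3, h4, ?_⟩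
    obtain ⟨b, hb1, hb2⟩ := ((h3.eventually_lt_const one_pos).and
      (eventually_ge_atTop (0:ℝ))).exists
    obtain ⟨c, hc1, hc2⟩ := ((h4.eventually_ge_atTop 1).and (eventually_le_atBot b)).exists
    obtain ⟨Z, -, hZ⟩ := intermediate_value_Icc' hc2 hcont.continuousOn ⟨hb1.le, hc1⟩
    refine ⟨Z, hZ, fun y hy => ?_⟩
    have hy' : F y = 1 := hy
    have hyS : y ∈ {Z : ℝ | 0 < F Z} := by simp only [Set.mem_setOf_eq, hy']; norm_num
    have hZS : Z ∈ {Z : ℝ | 0 < F Z} := by simp only [Set.mem_setOf_eq, hZ]; norm_num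
    exact hSA.injOn hyS hZS (hy'.trans hZ.symm)
  · -- Case α > 1
    intro hgt
    have hc : (1:ℝ) - α < 0 := by linarith
    have hcne : (1:ℝ) - α ≠ 0 := ne_of_lt hc
    have hq : 1 / (1 - α) < 0 := by
      apply div_neg_of_pos_of_neg one_pos hc
    haveI : Nonempty (Fin K) := ⟨⟨0, hK⟩⟩
    set m : ℝ := ⨅ i, a i with hm
    set Z₀ : ℝ := 1 / (1 - α) - m with hZ₀
    have hinf_le : ∀ i, m ≤ a i := fun i => ciInf_le (Set.finite_range a).bddBelow i
    obtain ⟨i0, hi0⟩ := exists_eq_ciInf_of_finite (f := a)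
    set F : ℝ → ℝ := fun Z => ∑ i, expAlpha α (-(a i) - Z) with hFdef
    have hone : (1 - α) * (1 / (1 - α)) = 1 := by field_simp
    have hbase : ∀ Z ∈ Set.Ioi Z₀, ∀ i, 0 < (1 - α) * (-(a i) - Z) + 1 := by
      intro Z hZ i
      have hZ' : 1 / (1 - α) - a i < Z := lt_of_le_of_lt (by
        have := hinf_le i; simp only [hZ₀]; linarith) hZ
      nlinarith [mul_lt_mul_of_neg_left hZ' hc]
    have hFeq : ∀ Z, F Z = ∑ i, ((1 - α) * (-(a i) - Z) + 1) ^ (1 / (1 - α)) := fun Z => rfl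
    have hcontbase : ∀ i : Fin K, Continuous (fun Z : ℝ => (1 - α) * (-(a i) - Z) + 1) :=
      fun i => ((continuous_const.mul (continuous_const.sub continuous_id)).add
        continuous_const)
    have hcont : ContinuousOn F (Set.Ioi Z₀) := by
      apply continuousOn_finset_sum
      intro i _
      apply ContinuousOn.rpow_const ((hcontbase i).continuousOn)
      intro Z hZ
      exact Or.inl (ne_of_gt (hbase Z hZ i))
    have hanti : AntitoneOn F (Set.Ioi Z₀) := by
      intro Z₁ h₁ Z₂ h₂ h12
      apply Finset.sum_le_sum
      intro i _
      exact Real.rpow_le_rpow_of_nonpos (hbase Z₁ h₁ i) (by nlinarith) hq.le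
    have hstrict : StrictAntiOn F (Set.Ioi Z₀) := by
      intro Z₁ h₁ Z₂ h₂ h12
      apply Finset.sum_lt_sum_of_nonempty Finset.univ_nonempty
      intro i _
      exact Real.rpow_lt_rpow_of_neg (hbase Z₁ h₁ i) (by nlinarith) hq
    have h3 : Tendsto F atTop (𝓝 0) := by
      have : Tendsto (fun Z : ℝ => ∑ i : Fin K,
          ((1 - α) * (-(a i) - Z) + 1) ^ (1 / (1 - α))) atTop (𝓝 (∑ _i : Fin K, (0:ℝ))) := by
        apply tendsto_finset_sum
        intro i _
        have hbtop : Tendsto (fun Z : ℝ => (1 - α) * (-(a i) - Z) + 1) atTop atTop := by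
          rw [tendsto_atTop]
          intro b
          filter_upwards [eventually_ge_atTop ((b - ((1 - α) * (-(a i)) + 1)) / (α - 1))]
            with Z hZ
          have h1 : (α - 1) * ((b - ((1 - α) * (-(a i)) + 1)) / (α - 1)) =
              b - ((1 - α) * (-(a i)) + 1) := by
            rw [mul_comm]
            exact div_mul_cancel₀ _ (show α - 1 ≠ 0 by linarith)
          nlinarith [mul_le_mul_of_nonneg_left hZ (show (0:ℝ) ≤ α - 1 by linarith)]
        have h2 := (tendsto_rpow_neg_atTop (show (0:ℝ) < -(1 / (1 - α)) by linarith)).comp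
          hbtop
        simp only [Function.comp_def, neg_neg] at h2
        exact h2
      have h0 : (∑ _i : Fin K, (0:ℝ)) = 0 := by simp
      rw [h0] at this
      exact Tendsto.congr (fun Z => (hFeq Z).symm) this
    have h4 : Tendsto F (𝓝[>] Z₀) atTop := by
      have hb00 : (1 - α) * (-(a i0) - Z₀) + 1 = 0 := by
        rw [hZ₀, hm, ← hi0]
        have e : -(a i0) - (1 / (1 - α) - a i0) = -(1 / (1 - α)) := by ring
        rw [e, mul_neg, hone]
        ring
      have hb0 : Tendsto (fun Z : ℝ => (1 - α) * (-(a i0) - Z) + 1) (𝓝[>] Z₀) (𝓝[>] 0) := by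
        rw [tendsto_nhdsWithin_iff]
        constructor
        · have := ((hcontbase i0).tendsto Z₀).mono_left
            (nhdsWithin_le_nhds (s := Set.Ioi Z₀))
          rwa [hb00] at this
        · filter_upwards [self_mem_nhdsWithin] with Z hZ
          exact hbase Z hZ i0
      have hcomp : Tendsto (fun x : ℝ => x ^ (1 / (1 - α))) (𝓝[>] (0:ℝ)) atTop := by
        have h := (tendsto_rpow_atTop (show (0:ℝ) < -(1 / (1 - α)) by linarith)).comp
          tendsto_inv_nhdsGT_zero
        apply h.congr'
        filter_upwards [self_mem_nhdsWithin] with x hx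
        have hx' : (0:ℝ) < x := hx
        show (x⁻¹) ^ (-(1 / (1 - α))) = x ^ (1 / (1 - α))
        rw [Real.inv_rpow hx'.le, Real.rpow_neg hx'.le, inv_inv]
      have hterm0 : Tendsto (fun Z : ℝ => ((1 - α) * (-(a i0) - Z) + 1) ^ (1 / (1 - α)))
          (𝓝[>] Z₀) atTop := hcomp.comp hb0
      apply tendsto_atTop_mono' _ _ hterm0
      filter_upwards [self_mem_nhdsWithin] with Z hZ
      rw [hFeq]
      exact Finset.single_le_sum (fun j _ => Real.rpow_nonneg (hbase Z hZ j).le _)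
        (Finset.mem_univ i0)
    refine ⟨hcont, hanti, h3, h4, ?_⟩
    obtain ⟨b, hb1, hb0⟩ := ((h3.eventually_lt_const one_pos).and
      (eventually_gt_atTop Z₀)).exists
    obtain ⟨c, ⟨hc1, hc2⟩, hc0⟩ := (((h4.eventually_ge_atTop 1).and
      (eventually_nhdsWithin_of_eventually_nhds (eventually_lt_nhds hb0))).and
      self_mem_nhdsWithin).exists
    have hsub : Set.Icc c b ⊆ Set.Ioi Z₀ := fun x hx => lt_of_lt_of_le hc0 hx.1
    obtain ⟨Z, hZmem, hZ⟩ := intermediate_value_Icc' hc2.le (hcont.mono hsub) ⟨hb1.le, hc1⟩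
    have hZIoi : Z ∈ Set.Ioi Z₀ := hsub hZmem
    refine ⟨Z, ⟨hZIoi, hZ⟩, fun y hy => ?_⟩
    exact hstrict.injOn hy.1 hZIoi (hy.2.trans hZ.symm)
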